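/- The CNF formula F_n encoding Sink-or-Clash on the n-hypercube is unsatisfiable, where F_n = (⋀_{u∈{0,1}^n} ⋁_{i∈[n]} x_{u,i}) ∧ (⋀_{u≠v} ⋀_{o∈{0,1}^{I_{u,v}}} ⋁_{i∈I_{u,v}} (x_{u,i} ≠ o_i ∨ x_{v,i} ≠ o_i)), with I_{u,v} = {i : u_i ≠ v_i}. -/
import Mathlib


/-- Core lemma: there is no outmap on the `n`-cube that has no sink and
no clash (where "no clash" is expressed as: distinct vertices differ in
their outmaps on some coordinate where the vertices differ). -/
theorem sinkOrClash : ∀ n : ℕ, ¬ ∃ s : (Fin n → Bool) → Fin n → Bool,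
    (∀ u, ∃ i, s u i = true) ∧
    (∀ u v, u ≠ v → ∃ i, u i ≠ v i ∧ s u i ≠ s v i)
  | 0 => by
    rintro ⟨s, hsink, -⟩
    obtain ⟨i, -⟩ := hsink (fun i => i.elim0)
    exact i.elim0
  | n + 1 => by
    rintro ⟨s, hsink, hclash⟩
    -- across each edge in the last direction, the last coordinate of the outmap flips
    have hdiff : ∀ w : Fin n → Bool,
        s (Fin.snoc w false) (Fin.last n) ≠ s (Fin.snoc w true) (Fin.last n) := by
      intro w
      have hne : (Fin.snoc w false : Fin (n+1) → Bool) ≠ Fin.snoc w true := by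
        intro h
        have := congrFun h (Fin.last n)
        simp [Fin.snoc_last] at this
      obtain ⟨i, hi, hsi⟩ := hclash _ _ hne
      refine Fin.lastCases ?_ ?_ i hi hsi
      · intro _ hsi; exact hsi
      · intro j hj _
        simp [Fin.snoc_castSucc] at hj
    -- choose the endpoint where the last coordinate of the outmap is false
    set b : (Fin n → Bool) → Bool :=
      fun w => !(s (Fin.snoc w false) (Fin.last n) = false : Bool) with hbdef
    have hb : ∀ w, s (Fin.snoc w (b w)) (Fin.last n) = false := by
      intro w
      by_cases h : s (Fin.snoc w false) (Fin.last n) = false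
      · simp [hbdef, h]
      · have h1 : s (Fin.snoc w false) (Fin.last n) = true := by
          revert h; cases s (Fin.snoc w false) (Fin.last n) <;> simp
        have h2 := hdiff w
        rw [h1] at h2
        have h3 : s (Fin.snoc w true) (Fin.last n) = false := by
          revert h2; cases s (Fin.snoc w true) (Fin.last n) <;> simp
        simp [hbdef, h1, h3]
    refine sinkOrClash n ⟨fun w j => s (Fin.snoc w (b w)) j.castSucc, ?_, ?_⟩
    · intro w
      obtain ⟨i, hi⟩ := hsink (Fin.snoc w (b w))
      refine Fin.lastCases ?_ ?_ i hi
      · intro hi; rw [hb w] at hi; exact absurd hi (by simp)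
      · intro j hj; exact ⟨j, hj⟩
    · intro w w' hww
      have hne : (Fin.snoc w (b w) : Fin (n+1) → Bool) ≠ Fin.snoc w' (b w') := by
        intro h
        apply hww
        funext j
        have := congrFun h j.castSucc
        simpa [Fin.snoc_castSucc] using this
      obtain ⟨i, hi, hsi⟩ := hclash _ _ hne
      refine Fin.lastCases ?_ ?_ i hi hsi
      · intro _ hsi
        rw [hb w, hb w'] at hsi
        exact absurd rfl hsi
      · intro j hj hsj
        simp only [Fin.snoc_castSucc] at hj
        exact ⟨j, hj, hsj⟩

/-- The CNF formula encoding Sink-or-Clash is unsatisfiable: no assignment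
`x` (encoding an outmap) makes every vertex a non-sink and every pair of
distinct vertices clash-free in the sense that for each pattern `o` some
differing coordinate has `x_{u,i} ≠ o_i` or `x_{v,i} ≠ o_i`. -/
theorem stmt12 (n : ℕ) :
    ¬ ∃ x : (Fin n → Bool) → Fin n → Bool,
      (∀ u : Fin n → Bool, ∃ i, x u i = true) ∧
      (∀ u v : Fin n → Bool, u ≠ v → ∀ o : Fin n → Bool,
        ∃ i, u i ≠ v i ∧ (x u i ≠ o i ∨ x v i ≠ o i)) := by
  rintro ⟨x, hsink, hclash⟩
  refine sinkOrClash n ⟨x, hsink, ?_⟩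
  intro u v huv
  obtain ⟨i, hi, h⟩ := hclash u v huv (x u)
  rcases h with h | h
  · exact absurd rfl h
  · exact ⟨i, hi, fun he => h he.symm⟩
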